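/- Let f(t) = t^k, f_i = f([i]_q/[n]_q). Then Δ_q^r f_0 = ([r]_q! · q^{r(r-1)/2} / [n]_q^k) · S_q(k, r), where S_q is the q-Stirling number of the second kind. -/

import Mathlib

open Finset Filter Topology

/-- The q-integer `[m]_q = 1 + q + ... + q^{m-1}`, with `[0]_q = 0`. -/
noncomputable def qInt (q : ℝ) (m : ℕ) : ℝ := ∑ i ∈ Finset.range m, q ^ i

/-- The q-factorial `[n]_q! = [1]_q [2]_q ⋯ [n]_q`. -/
noncomputable def qFact (q : ℝ) (n : ℕ) : ℝ := ∏ i ∈ Finset.range n, qInt q (i + 1)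

/-- The q-binomial coefficient `[n]_q!/([k]_q! [n-k]_q!)` (zero if `k > n`). -/
noncomputable def qBinom (q : ℝ) (n k : ℕ) : ℝ :=
  if k ≤ n then qFact q n / (qFact q k * qFact q (n - k)) else 0

/-- The q-Stirling number of the second kind. -/
noncomputable def qStirling (q : ℝ) (k r : ℕ) : ℝ :=
  (1 / (qFact q r * q ^ (r * (r - 1) / 2))) *
    ∑ i ∈ Finset.range (r + 1),
      (-1 : ℝ) ^ i * q ^ (i * (i - 1) / 2) * qBinom q r i * (qInt q (r - i)) ^ k

/-- The q-forward difference operator on sequences: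
`Δ_q^0 f_i = f_i`, `Δ_q^{r+1} f_i = Δ_q^r f_{i+1} - q^r Δ_q^r f_i`. -/
noncomputable def qDiff (q : ℝ) : ℕ → (ℕ → ℝ) → ℕ → ℝ
  | 0, f, i => f i
  | r + 1, f, i => qDiff q r f (i + 1) - q ^ r * qDiff q r f i

/-- The eigenvalues `λ_{k,q}^{(α,n)}` of the (α,q)-Bernstein operator. -/
noncomputable def lamEig (q α : ℝ) (n k : ℕ) : ℝ :=
  q ^ (k * (k - 1) / 2) * qFact q (n - 2) / (qFact q (n - k) * (qInt q n) ^ k) *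
    ((1 - α) * qInt q (n - k) * qInt q (n - 1 + k) + α * qInt q n * qInt q (n - 1))

/-- The coefficients `a_{n,q}(r,k)` of `T_{n,q,α}(t^k; x) = Σ_r a_{n,q}(r,k) x^r`. -/
noncomputable def aCoef (q α : ℝ) (n r k : ℕ) : ℝ :=
  q ^ (r * (r - 1) / 2) * qFact q (n - 2) / ((qInt q n) ^ k * qFact q (n - r)) *
    ((1 - α) * qInt q (n - r) *
        (qInt q (n + r - 1) * qStirling q (k + 1) (r + 1) -
          qInt q (r + 1) * qInt q (n - 1) * qStirling q k (r + 1)) +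
      α * qInt q n * qInt q (n - 1) * qStirling q k r)

/-- The (α,q)-Bernstein operator, via its forward-difference representation
`T_{n,q,α}(f;x) = Σ_{r=0}^n ((1-α) C_q(n-1,r) Δ_q^r g_0 + α C_q(n,r) Δ_q^r f_0) x^r`,
where `f_i = f([i]_q/[n]_q)` and
`g_i = (1 - q^{n-i-1}[i]_q/[n-1]_q) f_i + (q^{n-i-1}[i]_q/[n-1]_q) f_{i+1}`. -/
noncomputable def Talpha (q α : ℝ) (n : ℕ) (f : ℝ → ℝ) (x : ℝ) : ℝ :=
  let fs : ℕ → ℝ := fun i => f (qInt q i / qInt q n)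
  let gs : ℕ → ℝ := fun i =>
    (1 - q ^ (n - i - 1) * qInt q i / qInt q (n - 1)) * fs i +
      (q ^ (n - i - 1) * qInt q i / qInt q (n - 1)) * fs (i + 1)
  ∑ r ∈ Finset.range (n + 1),
    ((1 - α) * qBinom q (n - 1) r * qDiff q r gs 0 + α * qBinom q n r * qDiff q r fs 0) * x ^ r


lemma qInt_pos {q : ℝ} (hq : 0 < q) {m : ℕ} (hm : 1 ≤ m) : 0 < qInt q m :=
  Finset.sum_pos (fun i _ => pow_pos hq i) ⟨0, Finset.mem_range.mpr hm⟩

lemma qFact_pos {q : ℝ} (hq : 0 < q) (n : ℕ) : 0 < qFact q n :=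
  Finset.prod_pos fun i _ => qInt_pos hq (Nat.succ_le_succ (Nat.zero_le i))

lemma qInt_add (q : ℝ) (a b : ℕ) : qInt q (a + b) = qInt q a + q ^ a * qInt q b := by
  unfold qInt
  rw [Finset.sum_range_add, Finset.mul_sum]
  simp [pow_add]

lemma tri (j : ℕ) : (j + 1) * j / 2 = j * (j - 1) / 2 + j := by
  cases j with
  | zero => rfl
  | succ m =>
    rw [show (m + 1 + 1) * (m + 1) = (m + 1) * m + 2 * (m + 1) by ring,
      Nat.add_mul_div_left _ _ (by norm_num)]
    rfl

lemma qFact_succ (q : ℝ) (n : ℕ) : qFact q (n + 1) = qFact q n * qInt q (n + 1) := by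
  unfold qFact; rw [Finset.prod_range_succ]

lemma qFact_eq {q : ℝ} {m : ℕ} (hm : 1 ≤ m) :
    qFact q m = qFact q (m - 1) * qInt q m := by
  cases m with
  | zero => omega
  | succ t => exact qFact_succ q t

lemma qPascal {q : ℝ} (hq : 0 < q) {r j : ℕ} (hj : j ≤ r) :
    qBinom q (r + 1) (j + 1) = qBinom q r (j + 1) + q ^ (r - j) * qBinom q r j := by
  rcases eq_or_lt_of_le hj with rfl | hlt
  · rw [qBinom, qBinom, qBinom, if_pos le_rfl, if_pos le_rfl,
      if_neg (Nat.not_succ_le_self j)]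
    simp only [Nat.sub_self]
    have h0 : qFact q 0 = 1 := by simp [qFact]
    rw [h0, mul_one, mul_one, div_self (qFact_pos hq (j + 1)).ne',
      div_self (qFact_pos hq j).ne']
    norm_num
  · have h1 : j + 1 ≤ r := hlt
    have key : qInt q (r + 1) = qInt q (r - j) + q ^ (r - j) * qInt q (j + 1) := by
      rw [show r + 1 = (r - j) + (j + 1) by omega]; exact qInt_add q _ _
    have hf : qFact q (r - j) = qFact q (r - j - 1) * qInt q (r - j) :=
      qFact_eq (by omega)
    rw [qBinom, qBinom, qBinom, if_pos (by omega), if_pos h1, if_pos hj,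
      show r + 1 - (j + 1) = r - j by omega, show r - (j + 1) = r - j - 1 by omega,
      qFact_succ, qFact_succ q j, hf]
    have h2 := (qFact_pos hq r).ne'
    have h3 := (qFact_pos hq j).ne'
    have h4 := (qFact_pos hq (r - j - 1)).ne'
    have h5 := (qInt_pos hq (Nat.le_add_left 1 j)).ne'
    have h6 : qInt q (r - j) ≠ 0 := (qInt_pos hq (by omega)).ne'
    field_simp
    rw [key]; ring

lemma qDiff_eq_sum (q : ℝ) (hq : 0 < q) (r : ℕ) (f : ℕ → ℝ) (i : ℕ) :
    qDiff q r f i = ∑ j ∈ Finset.range (r + 1),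
      (-1 : ℝ) ^ j * q ^ (j * (j - 1) / 2) * qBinom q r j * f (i + r - j) := by
  induction r generalizing i with
  | zero => simp [qDiff, qBinom, qFact]
  | succ r ih =>
    have h0 : qBinom q (r + 1) 0 = 1 := by
      simp [qBinom, qFact]
      exact (qFact_pos hq (r + 1)).ne'
    have hb : qBinom q r 0 = 1 := by
      simp [qBinom, qFact]
      exact (qFact_pos hq r).ne'
    have hz : qBinom q r (r + 1) = 0 := if_neg (Nat.not_succ_le_self r)
    have step : ∀ j ∈ Finset.range (r + 1),
        (-1 : ℝ) ^ (j + 1) * q ^ ((j + 1) * ((j + 1) - 1) / 2) * qBinom q (r + 1) (j + 1) *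
          f (i + (r + 1) - (j + 1)) =
        (-1 : ℝ) ^ (j + 1) * q ^ ((j + 1) * j / 2) * qBinom q r (j + 1) * f (i + r - j)
          + (-(q ^ r)) * ((-1 : ℝ) ^ j * q ^ (j * (j - 1) / 2) * qBinom q r j * f (i + r - j)) := by
      intro j hj
      have hjr : j ≤ r := Nat.lt_succ_iff.mp (Finset.mem_range.mp hj)
      have he : q ^ ((j + 1) * j / 2) * q ^ (r - j) = q ^ r * q ^ (j * (j - 1) / 2) := by
        rw [← pow_add, ← pow_add, tri]
        congr 1; omega
      rw [qPascal hq hjr, show i + (r + 1) - (j + 1) = i + r - j by omega,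
        show (j + 1) * ((j + 1) - 1) / 2 = (j + 1) * j / 2 from rfl]
      linear_combination (-(-1 : ℝ) ^ j * qBinom q r j * f (i + r - j)) * he
    rw [show qDiff q (r + 1) f i = qDiff q r f (i + 1) - q ^ r * qDiff q r f i from rfl,
      ih, ih,
      Finset.sum_range_succ' (fun j => (-1 : ℝ) ^ j * q ^ (j * (j - 1) / 2) *
        qBinom q (r + 1) j * f (i + (r + 1) - j)) (r + 1)]
    rw [Finset.sum_congr rfl step, Finset.sum_add_distrib, ← Finset.mul_sum]
    have hA : (∑ j ∈ Finset.range (r + 1),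
          (-1 : ℝ) ^ j * q ^ (j * (j - 1) / 2) * qBinom q r j * f (i + 1 + r - j))
        = (∑ j ∈ Finset.range (r + 1),
            (-1 : ℝ) ^ (j + 1) * q ^ ((j + 1) * j / 2) * qBinom q r (j + 1) * f (i + r - j))
          + f (i + (r + 1) - 0) := by
      rw [Finset.sum_range_succ (fun j => (-1 : ℝ) ^ (j + 1) * q ^ ((j + 1) * j / 2) *
          qBinom q r (j + 1) * f (i + r - j)),
        Finset.sum_range_succ' (fun j => (-1 : ℝ) ^ j * q ^ (j * (j - 1) / 2) *
          qBinom q r j * f (i + 1 + r - j)) r]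
      simp only [hz, hb, mul_zero, zero_mul, add_zero]
      have : ∀ j : ℕ, i + 1 + r - (j + 1) = i + r - j := fun j => by omega
      simp only [this]
      norm_num
      congr 1
      omega
    rw [hA, h0]
    ring

theorem qDiff_pow_zero (q : ℝ) (hq : 0 < q) (n k r : ℕ) (hn : 1 ≤ n) (hr : r ≤ k) :
    qDiff q r (fun m => (qInt q m / qInt q n) ^ k) 0 =
      qFact q r * q ^ (r * (r - 1) / 2) / (qInt q n) ^ k * qStirling q k r := by
  have hS : qFact q r * q ^ (r * (r - 1) / 2) ≠ 0 :=
    (mul_pos (qFact_pos hq r) (pow_pos hq _)).ne'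
  have hn' : qInt q n ≠ 0 := (qInt_pos hq hn).ne'
  rw [qDiff_eq_sum q hq r _ 0, qStirling]
  simp only [Finset.mul_sum]
  apply Finset.sum_congr rfl
  intro j hj
  simp only [Nat.zero_add]
  rw [div_pow]
  field_simp
  rw [mul_div_cancel_right₀ _ (qFact_pos hq r).ne']
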